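/- Every right-angled Artin–Tits presentation (S,R) satisfies Property H: for every word w over S ∪ S⁻¹ representing the identity in the right-angled Artin group ⟨S|R⟩, w can be transformed to the empty word using only special transformations of types 0, 1, and 2. -/

import Mathlib

namespace ArtinConj

/-- A word over `S ∪ S⁻¹`: a letter is a generator together with a sign
(`true` = positive letter `s`, `false` = negative letter `s⁻¹`). -/
abbrev Word (S : Type) := List (S × Bool)

/-- The positive word associated to a list of generators. -/
def pos {S : Type} (v : List S) : Word S := v.map fun s => (s, true)

/-- The formal inverse of a word. -/
def winv {S : Type} (w : Word S) : Word S := (w.map fun p => (p.1, !p.2)).reverse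

/-- A presentation `(S, R)` is positive if all relations `v = v'` have both
sides nonempty positive words. -/
def Positive {S : Type} (R : Set (List S × List S)) : Prop :=
  ∀ p ∈ R, p.1 ≠ [] ∧ p.2 ≠ []

/-- `v = v'` is a relation of `R` (relations are unoriented). -/
def InR {S : Type} (R : Set (List S × List S)) (v v' : List S) : Prop :=
  (v, v') ∈ R ∨ (v', v) ∈ R

/-- Special transformations of types `0`, `1`, `2ℓ`, `2r` associated with a
positive presentation. -/
inductive Step {S : Type} (R : Set (List S × List S)) : Word S → Word S → Prop
  /-- type 0 : remove a trivial pair `s s⁻¹` or `s⁻¹ s`. -/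
  | free (w₁ w₂ : Word S) (s : S) (e : Bool) :
      Step R (w₁ ++ [(s, e), (s, !e)] ++ w₂) (w₁ ++ w₂)
  /-- type 1 : replace a factor `v` by `v'` for a relation `v = v'`. -/
  | rel (w₁ w₂ : Word S) (v v' : List S) (h : InR R v v') :
      Step R (w₁ ++ pos v ++ w₂) (w₁ ++ pos v' ++ w₂)
  /-- type 1 : replace a factor `v⁻¹` by `v'⁻¹` for a relation `v = v'`. -/
  | relInv (w₁ w₂ : Word S) (v v' : List S) (h : InR R v v') :
      Step R (w₁ ++ winv (pos v) ++ w₂) (w₁ ++ winv (pos v') ++ w₂)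
  /-- type 2r : replace `v⁻¹ v'` by `u u'⁻¹` where `v u = v' u'` is a relation,
  `v, v'` nonempty. -/
  | rev2r (w₁ w₂ : Word S) (v v' u u' : List S) (hv : v ≠ []) (hv' : v' ≠ [])
      (h : InR R (v ++ u) (v' ++ u')) :
      Step R (w₁ ++ winv (pos v) ++ pos v' ++ w₂) (w₁ ++ pos u ++ winv (pos u') ++ w₂)
  /-- type 2ℓ : replace `v v'⁻¹` by `u⁻¹ u'` where `u v = u' v'` is a relation,
  `v, v'` nonempty. -/
  | rev2l (w₁ w₂ : Word S) (v v' u u' : List S) (hv : v ≠ []) (hv' : v' ≠ [])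
      (h : InR R (u ++ v) (u' ++ v')) :
      Step R (w₁ ++ pos v ++ winv (pos v') ++ w₂) (w₁ ++ winv (pos u) ++ pos u' ++ w₂)

/-- `w ⇝_{0,1,2} w'`. -/
def Rw {S : Type} (R : Set (List S × List S)) : Word S → Word S → Prop :=
  Relation.ReflTransGen (Step R)

/-- Evaluation of a word in a group, given an interpretation of the generators. -/
def evalW {S G : Type} [Group G] (f : S → G) (w : Word S) : G :=
  (w.map fun p => if p.2 then f p.1 else (f p.1)⁻¹).prod

/-- The set of elements of the free group corresponding to the relations of `R`. -/
def rels {S : Type} (R : Set (List S × List S)) : Set (FreeGroup S) :=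
  {x | ∃ p ∈ R, x = evalW FreeGroup.of (pos p.1) * (evalW FreeGroup.of (pos p.2))⁻¹}

/-- The element of the presented group `⟨S | R⟩` represented by a word. -/
def evalG {S : Type} (R : Set (List S × List S)) (w : Word S) :
    PresentedGroup (rels R) :=
  evalW (fun s => (PresentedGroup.of s : PresentedGroup (rels R))) w

/-- Property `H` : every word representing `1` can be transformed to the empty
word using special transformations of types `0`, `1`, `2` only. -/
def PropertyH {S : Type} (R : Set (List S × List S)) : Prop :=
  ∀ w : Word S, evalG R w = 1 → Rw R w []


/-- The relation set of the right-angled presentation whose commuting pairs of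
generators are given by `rel`. -/
def commRels {S : Type} (rel : S → S → Prop) : Set (List S × List S) :=
  {p | ∃ s t : S, rel s t ∧ p = ([s, t], [t, s])}

/-! ### Auxiliary machinery for the proof -/

section Aux

variable {S : Type}

open Relation

/-- Basic rewriting steps: delete a trivial pair, swap adjacent commuting
letters (any signs), in any position (via `cons`). -/
inductive B (rel : S → S → Prop) : Word S → Word S → Prop
  | del (s : S) (e : Bool) (w : Word S) : B rel ((s, e) :: (s, !e) :: w) w
  | swap (s t : S) (e f : Bool) (w : Word S) (h : rel s t) :
      B rel ((s, e) :: (t, f) :: w) ((t, f) :: (s, e) :: w)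
  | cons (p : S × Bool) {w w' : Word S} : B rel w w' → B rel (p :: w) (p :: w')

variable {rel : S → S → Prop}

lemma bAppendLeft {u v : Word S} (c : Word S) (h : B rel u v) :
    B rel (c ++ u) (c ++ v) := by
  induction c with
  | nil => simpa
  | cons p c ih => exact B.cons p ih

lemma bAppendRight {u v : Word S} (c : Word S) (h : B rel u v) :
    B rel (u ++ c) (v ++ c) := by
  induction h with
  | del s e w => exact B.del s e (w ++ c)
  | swap s t e f w h => exact B.swap s t e f (w ++ c) h
  | cons p _ ih => exact B.cons p ih

lemma bsAppendLeft {u v : Word S} (c : Word S) (h : ReflTransGen (B rel) u v) :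
    ReflTransGen (B rel) (c ++ u) (c ++ v) := by
  induction h with
  | refl => exact .refl
  | tail _ h ih => exact ih.tail (bAppendLeft c h)

lemma bsAppendRight {u v : Word S} (c : Word S) (h : ReflTransGen (B rel) u v) :
    ReflTransGen (B rel) (u ++ c) (v ++ c) := by
  induction h with
  | refl => exact .refl
  | tail _ h ih => exact ih.tail (bAppendRight c h)

lemma bsCons {u v : Word S} (p : S × Bool) (h : ReflTransGen (B rel) u v) :
    ReflTransGen (B rel) (p :: u) (p :: v) :=
  bsAppendLeft [p] h

/-- Shuffle a letter rightwards through a block of commuting letters. -/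
lemma bsShuffleR {m : Word S} {s : S} {e : Bool} (hm : ∀ p ∈ m, rel s p.1)
    (d : Word S) :
    ReflTransGen (B rel) ((s, e) :: (m ++ d)) (m ++ ((s, e) :: d)) := by
  induction m with
  | nil => exact .refl
  | cons p m ih =>
    obtain ⟨t, f⟩ := p
    refine ReflTransGen.head (B.swap s t e f (m ++ d) (hm (t, f) (by simp))) ?_
    exact bsCons (t, f) (ih fun q hq => hm q (by simp [hq]))

/-- Shuffle a letter leftwards through a block of commuting letters. -/
lemma bsShuffleL (hs : ∀ a b : S, rel a b → rel b a) {m : Word S} {s : S} {e : Bool}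
    (hm : ∀ p ∈ m, rel s p.1) (d : Word S) :
    ReflTransGen (B rel) (m ++ ((s, e) :: d)) ((s, e) :: (m ++ d)) := by
  induction m with
  | nil => exact .refl
  | cons p m ih =>
    obtain ⟨t, f⟩ := p
    refine ReflTransGen.tail (bsCons (t, f) (ih fun q hq => hm q (by simp [hq]))) ?_
    exact B.swap t s f e (m ++ d) (hs s t (hm (t, f) (by simp)))

/-- Lemma F: effect of a basic step on a word of shape `m ++ (s,g) :: b` where
`m` commutes with `s`. -/
lemma fLemma (hs : ∀ a b : S, rel a b → rel b a) {u z : Word S} (h : B rel u z) :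
    ∀ (m b : Word S) (s : S) (g : Bool), u = m ++ ((s, g) :: b) →
      (∀ p ∈ m, rel s p.1) →
      (∃ m₂ b₂, z = m₂ ++ ((s, g) :: b₂) ∧ (∀ p ∈ m₂, rel s p.1) ∧
          ReflTransGen (B rel) (m ++ b) (m₂ ++ b₂)) ∨
        ReflTransGen (B rel) (m ++ b) ((s, !g) :: z) := by
  induction h with
  | del s' e' w =>
    intro m b s g heq hm
    rcases m with _ | ⟨q1, _ | ⟨q2, m''⟩⟩
    · injection heq with h1 h2
      injection h1 with h1a h1b
      subst h1a h1b h2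
      exact Or.inr .refl
    · injection heq with h1 h2
      injection h2 with h3 h4
      injection h3 with h3a h3b
      subst h3a h3b h4 h1
      simp only [Bool.not_not]
      exact Or.inr .refl
    · injection heq with h1 h2
      injection h2 with h3 h4
      subst h1 h3 h4
      refine Or.inl ⟨m'', b, rfl, fun p hp => hm p (by simp [hp]), ?_⟩
      exact .single (B.del s' e' (m'' ++ b))
  | swap s' t e' f w hrel =>
    intro m b s g heq hm
    rcases m with _ | ⟨q1, _ | ⟨q2, m''⟩⟩
    · injection heq with h1 h2
      injection h1 with h1a h1b
      subst h1a h1b h2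
      refine Or.inl ⟨[(t, f)], w, rfl, ?_, .refl⟩
      rintro p hp
      simp only [List.mem_singleton] at hp
      subst hp
      exact hrel
    · injection heq with h1 h2
      injection h2 with h3 h4
      injection h3 with h3a h3b
      subst h3a h3b h4 h1
      exact Or.inl ⟨[], (s', e') :: w, rfl, by simp, .refl⟩
    · injection heq with h1 h2
      injection h2 with h3 h4
      subst h1 h3 h4
      refine Or.inl ⟨(t, f) :: (s', e') :: m'', b, rfl, ?_, ?_⟩
      · intro p hp
        apply hm
        simp only [List.mem_cons] at hp ⊢
        tauto
      · exact .single (B.swap s' t e' f (m'' ++ b) hrel)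
  | cons q hB ih =>
    intro m b s g heq hm
    rcases m with _ | ⟨q1, m'⟩
    · injection heq with h1 h2
      subst h1 h2
      exact Or.inl ⟨[], _, rfl, by simp, .single hB⟩
    · injection heq with h1 h2
      subst h1
      rcases ih m' b s g h2 (fun p hp => hm p (by simp [hp])) with
        ⟨m₂, b₂, hz, hc, red⟩ | red
      · refine Or.inl ⟨q :: m₂, b₂, by simp [hz], ?_, bsCons q red⟩
        intro p hp
        rcases List.mem_cons.1 hp with h | hp
        · subst h; exact hm _ (by simp)
        · exact hc p hp
      · refine Or.inr ?_
        refine (bsCons q red).tail ?_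
        exact B.swap q.1 s q.2 (!g) _ (hs s q.1 (hm q (by simp)))
/-- Lemma E: effect of a basic step on a word containing a tracked pair
`(s,e) … (s,!e)` separated by a commuting block `m`. -/
lemma eLemma (hs : ∀ a b : S, rel a b → rel b a) (hi : ∀ x : S, ¬ rel x x)
    {u z : Word S} (h : B rel u z) :
    ∀ (a m b : Word S) (s : S) (e : Bool),
      u = a ++ ((s, e) :: (m ++ ((s, !e) :: b))) → (∀ p ∈ m, rel s p.1) →
      (∃ a₂ m₂ b₂, z = a₂ ++ ((s, e) :: (m₂ ++ ((s, !e) :: b₂))) ∧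
          (∀ p ∈ m₂, rel s p.1) ∧
          ReflTransGen (B rel) (a ++ (m ++ b)) (a₂ ++ (m₂ ++ b₂))) ∨
        ReflTransGen (B rel) (a ++ (m ++ b)) z := by
  induction h with
  | del s' e' w =>
    intro a m b s e heq hm
    rcases a with _ | ⟨q1, _ | ⟨q2, a''⟩⟩
    · injection heq with h1 h2
      injection h1 with h1a h1b
      subst h1a h1b
      rcases m with _ | ⟨p1, m''⟩
      · injection h2 with h3 h4
        subst h4
        exact Or.inr .refl
      · injection h2 with h3 h4
        subst h3 h4
        exact Or.inr (bsShuffleR (fun p hp => hm p (by simp [hp])) b)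
    · injection heq with h1 h2
      injection h2 with h3 h4
      injection h3 with h3a h3b
      subst h3a h1 h4
      subst h3b
      simp only [Bool.not_not]
      exact Or.inr (bsShuffleR hm b)
    · injection heq with h1 h2
      injection h2 with h3 h4
      subst h1 h3 h4
      refine Or.inl ⟨a'', m, b, rfl, hm, ?_⟩
      exact .single (B.del s' e' _)
  | swap s' t e' f w hrel =>
    intro a m b s e heq hm
    rcases a with _ | ⟨q1, _ | ⟨q2, a''⟩⟩
    · injection heq with h1 h2
      injection h1 with h1a h1b
      subst h1a h1b
      rcases m with _ | ⟨p1, m''⟩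
      · injection h2 with h3 h4
        injection h3 with h3a h3b
        exact absurd (h3a ▸ hrel) (hi s')
      · injection h2 with h3 h4
        subst h3 h4
        refine Or.inl ⟨[(t, f)], m'', b, rfl, fun p hp => hm p (by simp [hp]), .refl⟩
    · injection heq with h1 h2
      injection h2 with h3 h4
      injection h3 with h3a h3b
      subst h3a h3b h1 h4
      refine Or.inl ⟨[], (s', e') :: m, b, rfl, ?_, .refl⟩
      intro p hp
      rcases List.mem_cons.1 hp with h | hp
      · subst h; exact hs s' t hrel
      · exact hm p hp
    · injection heq with h1 h2
      injection h2 with h3 h4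
      subst h1 h3 h4
      refine Or.inl ⟨(t, f) :: (s', e') :: a'', m, b, rfl, hm, ?_⟩
      exact .single (B.swap s' t e' f _ hrel)
  | cons q hB ih =>
    intro a m b s e heq hm
    rcases a with _ | ⟨q1, a'⟩
    · injection heq with h1 h2
      subst h1 h2
      rcases fLemma hs hB m b s (!e) rfl hm with ⟨m₂, b₂, hz, hc, red⟩ | red
      · exact Or.inl ⟨[], m₂, b₂, by simp [hz], hc, red⟩
      · rw [Bool.not_not] at red
        exact Or.inr red
    · injection heq with h1 h2
      subst h1
      rcases ih a' m b s e h2 hm with ⟨a₂, m₂, b₂, hz, hc, red⟩ | red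
      · exact Or.inl ⟨q :: a₂, m₂, b₂, by simp [hz], hc, bsCons q red⟩
      · exact Or.inr (bsCons q red)

/-- Key lemma: a reduction to the empty word survives deletion of a tracked
cancelling pair separated by a commuting block. -/
lemma dLemma (hs : ∀ a b : S, rel a b → rel b a) (hi : ∀ x : S, ¬ rel x x)
    {w : Word S} (h : ReflTransGen (B rel) w []) :
    ∀ (a m b : Word S) (s : S) (e : Bool),
      w = a ++ ((s, e) :: (m ++ ((s, !e) :: b))) → (∀ p ∈ m, rel s p.1) →
      ReflTransGen (B rel) (a ++ (m ++ b)) [] := by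
  induction h using Relation.ReflTransGen.head_induction_on with
  | refl =>
    intro a m b s e heq _
    exact absurd heq.symm (by simp)
  | head hstep hchain ih =>
    intro a m b s e heq hm
    subst heq
    rcases eLemma hs hi hstep a m b s e rfl hm with ⟨a₂, m₂, b₂, hz, hc, red⟩ | red
    · exact red.trans (ih a₂ m₂ b₂ s e hz hc)
    · exact red.trans hchain

/-- Reductions to the empty word are preserved backwards along basic steps. -/
lemma backStep (hs : ∀ a b : S, rel a b → rel b a) (hi : ∀ x : S, ¬ rel x x)
    {u v : Word S} (h : B rel u v) :
    ∀ c d : Word S, ReflTransGen (B rel) (c ++ (u ++ d)) [] →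
      ReflTransGen (B rel) (c ++ (v ++ d)) [] := by
  induction h with
  | del s e w =>
    intro c d hred
    exact dLemma hs hi hred c [] (w ++ d) s e (by simp) (by simp)
  | swap s t e f w hrel =>
    intro c d hred
    refine ReflTransGen.head ?_ hred
    exact bAppendLeft c (B.swap t s f e (w ++ d) (hs s t hrel))
  | cons q hB ih =>
    intro c d hred
    have h1 := ih (c ++ [q]) d (by simpa using hred)
    simpa using h1
/-- If two words are equivalent under the congruence generated by basic steps,
reducibility to the empty word transfers. -/
lemma eqvToRed (hs : ∀ a b : S, rel a b → rel b a) (hi : ∀ x : S, ¬ rel x x)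
    {u v : Word S} (h : Relation.EqvGen (B rel) u v) :
    ReflTransGen (B rel) u [] ↔ ReflTransGen (B rel) v [] := by
  induction h with
  | rel a b hab =>
    constructor
    · intro H
      have := backStep hs hi hab [] [] (by simpa using H)
      simpa using this
    · intro H
      exact ReflTransGen.head hab H
  | refl a => exact Iff.rfl
  | symm a b _ ih => exact ih.symm
  | trans a b c _ _ ih₁ ih₂ => exact ih₁.trans ih₂

lemma winv_cons (p : S × Bool) (w : Word S) :
    winv (p :: w) = winv w ++ [(p.1, !p.2)] := by
  simp [winv]

/-- `w⁻¹ w` reduces to the empty word. -/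
lemma winvCancel (w : Word S) :
    ReflTransGen (B rel) (winv w ++ w) [] := by
  induction w with
  | nil => exact .refl
  | cons p w ih =>
    obtain ⟨s, e⟩ := p
    have h1 : winv ((s, e) :: w) ++ ((s, e) :: w)
        = winv w ++ ((s, !e) :: (s, e) :: w) := by
      rw [winv_cons]; simp
    rw [h1]
    refine ReflTransGen.head ?_ ih
    have := bAppendLeft (rel := rel) (winv w) (B.del s (!e) w)
    simpa [Bool.not_not] using this

lemma eqvAppendLeft {u v : Word S} (c : Word S)
    (h : Relation.EqvGen (B rel) u v) :
    Relation.EqvGen (B rel) (c ++ u) (c ++ v) := by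
  induction h with
  | rel a b hab => exact .rel _ _ (bAppendLeft c hab)
  | refl a => exact .refl _
  | symm a b _ ih => exact .symm _ _ ih
  | trans a b c' _ _ ih₁ ih₂ => exact .trans _ _ _ ih₁ ih₂

lemma eqvAppendRight {u v : Word S} (c : Word S)
    (h : Relation.EqvGen (B rel) u v) :
    Relation.EqvGen (B rel) (u ++ c) (v ++ c) := by
  induction h with
  | rel a b hab => exact .rel _ _ (bAppendRight c hab)
  | refl a => exact .refl _
  | symm a b _ ih => exact .symm _ _ ih
  | trans a b c' _ _ ih₁ ih₂ => exact .trans _ _ _ ih₁ ih₂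

lemma eqvAppend {u u' v v' : Word S}
    (h : Relation.EqvGen (B rel) u u') (h' : Relation.EqvGen (B rel) v v') :
    Relation.EqvGen (B rel) (u ++ v) (u' ++ v') :=
  .trans _ _ _ (eqvAppendRight v h) (eqvAppendLeft u' h')

lemma eqvWinv (hs : ∀ a b : S, rel a b → rel b a) {u v : Word S}
    (h : Relation.EqvGen (B rel) u v) :
    Relation.EqvGen (B rel) (winv u) (winv v) := by
  induction h with
  | rel a b hab =>
    induction hab with
    | del s e w =>
      refine .rel _ _ ?_
      have hb := bAppendLeft (rel := rel) (winv w) (B.del s e ([] : Word S))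
      rw [winv_cons, winv_cons, List.append_assoc]
      simpa [Bool.not_not] using hb
    | swap s t e f w hrel =>
      refine .rel _ _ ?_
      rw [winv_cons, winv_cons, winv_cons, winv_cons, List.append_assoc,
        List.append_assoc]
      exact bAppendLeft (winv w) (B.swap t s (!f) (!e) [] (hs s t hrel))
    | cons q hB ih =>
      rw [winv_cons, winv_cons]
      exact eqvAppendRight _ ih
  | refl a => exact .refl _
  | symm a b _ ih => exact .symm _ _ ih
  | trans a b c _ _ ih₁ ih₂ => exact .trans _ _ _ ih₁ ih₂

lemma bsToEqv {u v : Word S} (h : ReflTransGen (B rel) u v) :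
    Relation.EqvGen (B rel) u v := by
  induction h with
  | refl => exact .refl _
  | tail _ hstep ih => exact .trans _ _ _ ih (.rel _ _ hstep)

/-- Every basic step is a special transformation for the right-angled
presentation. -/
lemma stepCons {R : Set (List S × List S)} {u v : Word S} (p : S × Bool)
    (h : Step R u v) : Step R (p :: u) (p :: v) := by
  cases h with
  | free w₁ w₂ s e => exact Step.free (p :: w₁) w₂ s e
  | rel w₁ w₂ a a' hr => exact Step.rel (p :: w₁) w₂ a a' hr
  | relInv w₁ w₂ a a' hr => exact Step.relInv (p :: w₁) w₂ a a' hr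
  | rev2r w₁ w₂ a a' c c' ha ha' hr => exact Step.rev2r (p :: w₁) w₂ a a' c c' ha ha' hr
  | rev2l w₁ w₂ a a' c c' ha ha' hr => exact Step.rev2l (p :: w₁) w₂ a a' c c' ha ha' hr

lemma stepOfB {u v : Word S} (h : B rel u v) :
    Step (commRels rel) u v := by
  induction h with
  | del s e w => exact Step.free [] w s e
  | swap s t e f w hrel =>
    cases e <;> cases f
    · -- s⁻¹ t⁻¹ → t⁻¹ s⁻¹  : relInv with relation [t,s] = [s,t]
      exact Step.relInv [] w [t, s] [s, t] (Or.inr ⟨s, t, hrel, rfl⟩)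
    · -- s⁻¹ t → t s⁻¹ : rev2r
      exact Step.rev2r [] w [s] [t] [t] [s] (by simp) (by simp)
        (Or.inl ⟨s, t, hrel, rfl⟩)
    · -- s t⁻¹ → t⁻¹ s : rev2l
      exact Step.rev2l [] w [s] [t] [t] [s] (by simp) (by simp)
        (Or.inr ⟨s, t, hrel, rfl⟩)
    · -- s t → t s : rel
      exact Step.rel [] w [s, t] [t, s] (Or.inl ⟨s, t, hrel, rfl⟩)
  | cons q _ ih => exact stepCons q ih

/-- The setoid on words generated by basic steps. -/
def bSetoid (rel : S → S → Prop) : Setoid (Word S) :=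
  Relation.EqvGen.setoid (B rel)

/-- The quotient of words by the congruence generated by basic steps is a
group. -/
def qGroup (rel : S → S → Prop) (hs : ∀ a b : S, rel a b → rel b a) :
    Group (Quotient (bSetoid rel)) where
  mul := Quotient.map₂ (· ++ ·) fun _ _ h _ _ h' => eqvAppend h h'
  one := Quotient.mk (bSetoid rel) []
  inv := Quotient.map winv fun _ _ h => eqvWinv hs h
  mul_assoc a b c := by
    refine Quotient.inductionOn₃ a b c fun a b c => ?_
    show Quotient.mk _ ((a ++ b) ++ c) = Quotient.mk _ (a ++ (b ++ c))
    rw [List.append_assoc]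
  one_mul a := by
    refine Quotient.inductionOn a fun a => ?_
    show Quotient.mk _ ([] ++ a) = Quotient.mk _ a
    rfl
  mul_one a := by
    refine Quotient.inductionOn a fun a => ?_
    show Quotient.mk _ (a ++ []) = Quotient.mk _ a
    rw [List.append_nil]
  inv_mul_cancel a := by
    refine Quotient.inductionOn a fun a => ?_
    show Quotient.mk _ (winv a ++ a) = Quotient.mk _ []
    exact Quotient.sound (bsToEqv (winvCancel a))
lemma map_evalW {G H : Type} [Group G] [Group H] (φ : G →* H) (g : S → G)
    (u : Word S) : φ (evalW g u) = evalW (fun s => φ (g s)) u := by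
  induction u with
  | nil => simp [evalW]
  | cons p u ih =>
    show φ ((if p.2 then g p.1 else (g p.1)⁻¹) * evalW g u) = _
    rw [map_mul, ih]
    show _ = (if p.2 then φ (g p.1) else (φ (g p.1))⁻¹) * evalW (fun s => φ (g s)) u
    congr 1
    split <;> simp

end Aux

/-- every right-angled Artin–Tits presentation satisfies Property
`H`: every word over `S ∪ S⁻¹` representing the identity of the right-angled
Artin group can be transformed to the empty word using special transformations
of types `0`, `1`, `2` only. -/
theorem right_angled_propertyH {S : Type}
    (rel : S → S → Prop) (hsym : ∀ s t : S, rel s t → rel t s)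
    (hirr : ∀ s : S, ¬ rel s s) :
    PropertyH (commRels rel) := by
  intro w hw
  letI : Group (Quotient (bSetoid rel)) := qGroup rel hsym
  let f : S → Quotient (bSetoid rel) := fun s => Quotient.mk (bSetoid rel) [(s, true)]
  have heval : ∀ u : Word S, evalW f u = Quotient.mk (bSetoid rel) u := by
    intro u
    induction u with
    | nil => rfl
    | cons p u ih =>
      obtain ⟨s, e⟩ := p
      show (if e then f s else (f s)⁻¹) * evalW f u = _
      rw [ih]
      cases e
      · show (f s)⁻¹ * Quotient.mk (bSetoid rel) u = _
        exact rfl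
      · exact rfl
  have hcond : ∀ r ∈ rels (commRels rel), FreeGroup.lift f r = 1 := by
    rintro r ⟨p, hp, rfl⟩
    obtain ⟨s, t, hst, rfl⟩ := hp
    rw [map_mul, map_inv, map_evalW, map_evalW]
    have hfe : (fun x => FreeGroup.lift f (FreeGroup.of x)) = f :=
      funext fun x => by simp
    rw [hfe, heval, heval, mul_inv_eq_one]
    exact Quotient.sound (.rel _ _ (B.swap s t true true [] hst))
  have hkey : PresentedGroup.toGroup hcond (evalG (commRels rel) w)
      = Quotient.mk (bSetoid rel) w := by
    show PresentedGroup.toGroup hcond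
      (evalW (fun s => (PresentedGroup.of s : PresentedGroup (rels (commRels rel)))) w)
      = Quotient.mk (bSetoid rel) w
    rw [map_evalW]
    have hfe : (fun s => PresentedGroup.toGroup hcond
        (PresentedGroup.of (rels := rels (commRels rel)) s)) = f :=
      funext fun s => PresentedGroup.toGroup.of hcond
    rw [hfe]
    exact heval w
  rw [hw, map_one] at hkey
  have hqe : Relation.EqvGen (B rel) w [] :=
    Quotient.exact (s := bSetoid rel)
      (hkey.symm.trans (rfl : (1 : Quotient (bSetoid rel)) = Quotient.mk (bSetoid rel) []))
  have hred : Relation.ReflTransGen (B rel) w [] :=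
    (eqvToRed hsym hirr hqe).mpr .refl
  show Relation.ReflTransGen (Step (commRels rel)) w []
  exact Relation.ReflTransGen.mono (fun _ _ h => stepOfB h) _ _ hred

end ArtinConj
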